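/- Let n, k ≥ 1 and let μ = (μ₁,…,μ_n) be integers with 0 ≤ μ_i ≤ (n−i)k for all i. Construct pairwise disjoint k-element sets S₁,…,S_n ⊆ {1,…,nk} by: starting with S = {1,…,nk}, for i = 1,…,n let S_i consist of the elements of S in positions μ_i+1, μ_i+2, …, μ_i+k of the increasing ordering of S (equivalently, the k elements of S that are consecutive within S beginning at the (μ_i+1)-th smallest element of S), and then remove S_i from S. Define the sequence s = (s₁,…,s_{nk}) by s_j = n+1−i for j ∈ S_i. Then s is a k-Stirling permutation of size n: it is a rearrangement of the multiset {1^k, 2^k, …, n^k}, and whenever s_p = s_q with p < q, every entry s_r with p ≤ r ≤ q satisfies s_r ≥ s_p. -/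

import Mathlib

/-- The set of still-unused integers before step `i` of the construction: start with
`{1, …, nk}` and repeatedly remove the chosen `k`-element set. -/
def remSet (n k : ℕ) (μ : ℕ → ℕ) : ℕ → Finset ℕ
  | 0 => Finset.Icc 1 (n * k)
  | i + 1 =>
      remSet n k μ i \
        ((((remSet n k μ i).sort (· ≤ ·)).drop (μ i)).take k).toFinset

/-- `S_{i+1}` (0-based `i`): the `k` elements of the remaining set `remSet i` in
positions `μ_i + 1, …, μ_i + k` of its increasing ordering. -/
def Sset (n k : ℕ) (μ : ℕ → ℕ) (i : ℕ) : Finset ℕ :=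
  ((((remSet n k μ i).sort (· ≤ ·)).drop (μ i)).take k).toFinset

/-- The sequence `s`: `s j = n + 1 − i` (1-based `i`) for `j ∈ S_i`. -/
def stirling (n k : ℕ) (μ : ℕ → ℕ) (j : ℕ) : ℕ :=
  ∑ i ∈ Finset.range n, if j ∈ Sset n k μ i then n - i else 0

namespace Stmt15Aux

variable {n k : ℕ} {μ : ℕ → ℕ}

lemma sset_subset_rem (i : ℕ) : Sset n k μ i ⊆ remSet n k μ i := by
  intro x hx
  rw [Sset, List.mem_toFinset] at hx
  exact (Finset.mem_sort _).1 (List.drop_subset _ _ (List.take_subset _ _ hx))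

lemma rem_succ (i : ℕ) : remSet n k μ (i + 1) = remSet n k μ i \ Sset n k μ i := rfl

lemma rem_subset {i j : ℕ} (h : i ≤ j) : remSet n k μ j ⊆ remSet n k μ i := by
  induction j with
  | zero => simpa [Nat.le_zero.1 h]
  | succ m ih =>
    rcases Nat.lt_or_ge i (m + 1) with h' | h'
    · exact (Finset.sdiff_subset).trans (ih (Nat.lt_succ_iff.1 h'))
    · have : i = m + 1 := le_antisymm h h'
      simp [this]

lemma rem_subset_Icc (i : ℕ) : remSet n k μ i ⊆ Finset.Icc 1 (n * k) :=
  rem_subset (Nat.zero_le i)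

lemma sset_nodup (i : ℕ) :
    (((((remSet n k μ i).sort (· ≤ ·)).drop (μ i)).take k)).Nodup :=
  List.Nodup.sublist ((List.take_sublist _ _).trans (List.drop_sublist _ _))
    (Finset.sort_nodup _ _)

lemma rem_card (hμ : ∀ i, i < n → μ i ≤ (n - 1 - i) * k) :
    ∀ i ≤ n, (remSet n k μ i).card = (n - i) * k := by
  intro i hi
  induction i with
  | zero => simp [remSet, Nat.card_Icc]
  | succ m ih =>
    have hm : m < n := hi
    have hcard : (remSet n k μ m).card = (n - m) * k := ih hm.le
    have hlen : ((remSet n k μ m).sort (· ≤ ·)).length = (n - m) * k := by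
      rw [Finset.length_sort, hcard]
    have hμm : μ m + k ≤ (n - m) * k := by
      have := hμ m hm
      have h1 : (n - 1 - m) * k + k = (n - m) * k := by
        rw [← Nat.succ_mul]
        congr 1
        omega
      omega
    have hSlen : ((((remSet n k μ m).sort (· ≤ ·)).drop (μ m)).take k).length = k := by
      rw [List.length_take, List.length_drop, hlen]
      omega
    have hScard : (Sset n k μ m).card = k := by
      rw [Sset, List.toFinset_card_of_nodup (sset_nodup m), hSlen]
    rw [rem_succ, Finset.card_sdiff_of_subset (sset_subset_rem m), hScard, hcard]
    have h2 : n - (m+1) = (n - m) - 1 := by omega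
    rw [h2, Nat.sub_one_mul]

lemma sset_card (hμ : ∀ i, i < n → μ i ≤ (n - 1 - i) * k) {i : ℕ} (hi : i < n) :
    (Sset n k μ i).card = k := by
  have hcard := rem_card hμ i hi.le
  have hlen : ((remSet n k μ i).sort (· ≤ ·)).length = (n - i) * k := by
    rw [Finset.length_sort, hcard]
  have hμm : μ i + k ≤ (n - i) * k := by
    have := hμ i hi
    have h1 : (n - 1 - i) * k + k = (n - i) * k := by
      rw [← Nat.succ_mul]; congr 1; omega
    omega
  rw [Sset, List.toFinset_card_of_nodup (sset_nodup i), List.length_take,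
    List.length_drop, hlen]
  omega

lemma sset_disjoint {i j : ℕ} (h : i < j) : Disjoint (Sset n k μ i) (Sset n k μ j) := by
  have h1 : Sset n k μ j ⊆ remSet n k μ (i + 1) := (sset_subset_rem j).trans (rem_subset h)
  rw [rem_succ] at h1
  exact Finset.disjoint_left.2 fun x hx hx' => (Finset.mem_sdiff.1 (h1 hx')).2 hx

end Stmt15Aux

namespace Stmt15Aux

variable {n k : ℕ} {μ : ℕ → ℕ}

lemma mem_sset_iff {i x : ℕ} :
    x ∈ Sset n k μ i ↔ ∃ (j : ℕ) (h : j < ((remSet n k μ i).sort (· ≤ ·)).length),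
      μ i ≤ j ∧ j < μ i + k ∧ ((remSet n k μ i).sort (· ≤ ·))[j] = x := by
  set L := (remSet n k μ i).sort (· ≤ ·) with hL
  rw [Sset, ← hL, List.mem_toFinset, List.mem_iff_getElem]
  constructor
  · rintro ⟨m, hm, rfl⟩
    have hm' : m < k ∧ m < L.length - μ i := by
      have := hm
      rw [List.length_take, List.length_drop] at this
      omega
    refine ⟨μ i + m, by omega, by omega, by omega, ?_⟩
    rw [List.getElem_take, List.getElem_drop]
  · rintro ⟨j, hj, h1, h2, rfl⟩
    have hm : j - μ i < ((L.drop (μ i)).take k).length := by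
      rw [List.length_take, List.length_drop]
      omega
    refine ⟨j - μ i, hm, ?_⟩
    rw [List.getElem_take, List.getElem_drop]
    congr 1
    omega

lemma mem_sset_of_between {i p q r : ℕ}
    (hp : p ∈ Sset n k μ i) (hq : q ∈ Sset n k μ i) (hr : r ∈ remSet n k μ i)
    (h1 : p ≤ r) (h2 : r ≤ q) : r ∈ Sset n k μ i := by
  set L := (remSet n k μ i).sort (· ≤ ·) with hL
  have hmono : StrictMono L.get := (Finset.sortedLT_sort _).strictMono_get
  obtain ⟨jp, hjp, hp1, hp2, hpv⟩ := mem_sset_iff.1 hp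
  obtain ⟨jq, hjq, hq1, hq2, hqv⟩ := mem_sset_iff.1 hq
  have hrL : r ∈ L := (Finset.mem_sort _).2 hr
  obtain ⟨jr, hjr, hrv⟩ := List.mem_iff_getElem.1 hrL
  have hle1 : jp ≤ jr := by
    by_contra hlt
    have := hmono (show (⟨jr, hjr⟩ : Fin L.length) < ⟨jp, hjp⟩ by
      simp [Fin.lt_def]; omega)
    simp only [List.get_eq_getElem, hpv, hrv] at this
    have hpv' : L[jp] = p := hpv
    omega
  have hle2 : jr ≤ jq := by
    by_contra hlt
    have := hmono (show (⟨jq, hjq⟩ : Fin L.length) < ⟨jr, hjr⟩ by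
      simp [Fin.lt_def]; omega)
    simp only [List.get_eq_getElem, hqv, hrv] at this
    have hqv' : L[jq] = q := hqv
    omega
  exact mem_sset_iff.2 ⟨jr, hjr, by omega, by omega, hrv⟩

lemma stirling_eq {i j : ℕ} (hi : i < n) (hj : j ∈ Sset n k μ i) :
    stirling n k μ j = n - i := by
  rw [stirling, Finset.sum_eq_single i]
  · simp [hj]
  · intro b _ hne
    rw [if_neg]
    intro hb'
    rcases hne.lt_or_gt with h | h
    · exact Finset.disjoint_left.1 (sset_disjoint h) hb' hj
    · exact Finset.disjoint_left.1 (sset_disjoint h) hj hb'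
  · intro h
    exact absurd (Finset.mem_range.2 hi) h

lemma exists_sset (hμ : ∀ i, i < n → μ i ≤ (n - 1 - i) * k) {j : ℕ}
    (hj : j ∈ Finset.Icc 1 (n * k)) : ∃ i < n, j ∈ Sset n k μ i := by
  have hempty : remSet n k μ n = ∅ := by
    have := rem_card hμ n le_rfl
    simpa using this
  have key : ∀ m, j ∉ remSet n k μ m → ∃ i < m, j ∈ Sset n k μ i := by
    intro m
    induction m with
    | zero => intro h; exact absurd hj h
    | succ m ih =>
      intro h
      by_cases hm : j ∈ remSet n k μ m
      · refine ⟨m, Nat.lt_succ_self m, ?_⟩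
        rw [rem_succ] at h
        by_contra hS
        exact h (Finset.mem_sdiff.2 ⟨hm, hS⟩)
      · obtain ⟨i, hi, hS⟩ := ih hm
        exact ⟨i, hi.trans (Nat.lt_succ_self m), hS⟩
  obtain ⟨i, hi, hS⟩ := key n (by rw [hempty]; exact Finset.notMem_empty j)
  exact ⟨i, hi, hS⟩

end Stmt15Aux

open Stmt15Aux in
/-- for `n, k ≥ 1` and `0 ≤ μ_i ≤ (n−i)k` (1-based `i`; here 0-based),
the sequence `s` constructed from the sets `S₁, …, S_n` is a `k`-Stirling permutation
of size `n`: every value `v ∈ {1, …, n}` occurs exactly `k` times among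
`s_1, …, s_{nk}`, and whenever `s_p = s_q` with `p < q`, every `s_r` with `p ≤ r ≤ q`
satisfies `s_r ≥ s_p`. -/
theorem stmt15 (n k : ℕ) (hn : 1 ≤ n) (hk : 1 ≤ k) (μ : ℕ → ℕ)
    (hμ : ∀ i, i < n → μ i ≤ (n - 1 - i) * k) :
    (∀ v, 1 ≤ v → v ≤ n →
      ((Finset.Icc 1 (n * k)).filter fun j => stirling n k μ j = v).card = k) ∧
    (∀ p q r, 1 ≤ p → q ≤ n * k → p < q → p ≤ r → r ≤ q →
      stirling n k μ p = stirling n k μ q →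
      stirling n k μ p ≤ stirling n k μ r) := by
  constructor
  · intro v hv1 hv2
    have hlt : n - v < n := by omega
    have heq : ((Finset.Icc 1 (n * k)).filter fun j => stirling n k μ j = v)
        = Sset n k μ (n - v) := by
      ext j
      simp only [Finset.mem_filter]
      constructor
      · rintro ⟨hj, hs⟩
        obtain ⟨i, hi, hS⟩ := exists_sset hμ hj
        have := stirling_eq hi hS
        have : i = n - v := by omega
        rwa [← this]
      · intro hS
        refine ⟨rem_subset_Icc _ (sset_subset_rem _ hS), ?_⟩
        rw [stirling_eq hlt hS]
        omega
    rw [heq]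
    exact sset_card hμ hlt
  · intro p q r hp1 hq2 hpq hpr hrq hst
    have hpI : p ∈ Finset.Icc 1 (n * k) := Finset.mem_Icc.2 ⟨hp1, by omega⟩
    have hqI : q ∈ Finset.Icc 1 (n * k) := Finset.mem_Icc.2 ⟨by omega, hq2⟩
    have hrI : r ∈ Finset.Icc 1 (n * k) := Finset.mem_Icc.2 ⟨by omega, by omega⟩
    obtain ⟨i, hi, hpS⟩ := exists_sset hμ hpI
    obtain ⟨i', hi', hqS⟩ := exists_sset hμ hqI
    obtain ⟨m, hm, hrS⟩ := exists_sset hμ hrI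
    have hsp := stirling_eq hi hpS
    have hsq := stirling_eq hi' hqS
    have hsr := stirling_eq hm hrS
    have hii' : i = i' := by omega
    subst hii'
    rcases le_or_gt m i with hmi | hmi
    · omega
    · exfalso
      have hrR : r ∈ remSet n k μ i := by
        have : r ∈ remSet n k μ (i + 1) := rem_subset hmi (sset_subset_rem _ hrS)
        exact Finset.sdiff_subset this
      have hrSi : r ∈ Sset n k μ i := mem_sset_of_between hpS hqS hrR hpr hrq
      exact Finset.disjoint_left.1 (sset_disjoint hmi) hrSi hrS
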